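/- Conversely, let E, W be real vector spaces, J : E → E linear with J² = 0 and ker J = range J, p : E → W a surjective linear map with ker p = ker J, and K : E → W a surjective linear map satisfying K ∘ J = p. Set H := ker K and V := ker J. Then H ∩ V = {0} and H + V = E, i.e. E = H ⊕ V; hence K determines a splitting (a connection) of E into horizontal and vertical subspaces. -/
import Mathlib

/-- Converse direction: a connection map `K` with `K ∘ J = p` determines a splitting
into horizontal subspace `H = ker K` and vertical subspace `V = ker J`. -/
theorem connection_from_connection_map
    {E W : Type*} [AddCommGroup E] [Module ℝ E] [AddCommGroup W] [Module ℝ W]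
    (J : E →ₗ[ℝ] E) (hJ2 : J ∘ₗ J = 0)
    (hJ : LinearMap.ker J = LinearMap.range J)
    (p : E →ₗ[ℝ] W) (hp : Function.Surjective p)
    (hkerp : LinearMap.ker p = LinearMap.ker J)
    (K : E →ₗ[ℝ] W) (hK : Function.Surjective K)
    (hKJ : K ∘ₗ J = p) :
    LinearMap.ker K ⊓ LinearMap.ker J = ⊥ ∧
      LinearMap.ker K ⊔ LinearMap.ker J = ⊤ := by
  constructor
  · rw [eq_bot_iff]
    rintro x ⟨hxK, hxJ⟩
    simp only [Submodule.mem_bot]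
    have hxr : x ∈ LinearMap.range J := hJ ▸ hxJ
    obtain ⟨y, rfl⟩ := hxr
    have hpy : p y = 0 := by
      have := LinearMap.congr_fun hKJ y
      simp only [LinearMap.coe_comp, Function.comp_apply] at this
      rw [← this]; exact hxK
    have : y ∈ LinearMap.ker J := hkerp ▸ (LinearMap.mem_ker.mpr hpy)
    simpa using this
  · rw [eq_top_iff]
    intro x _
    obtain ⟨y, hy⟩ := hp (K x)
    have hKJy : K (J y) = K x := by
      have := LinearMap.congr_fun hKJ y
      simp only [LinearMap.coe_comp, Function.comp_apply] at this
      rw [this, hy]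
    refine Submodule.mem_sup.mpr ⟨x - J y, ?_, J y, ?_, by abel⟩
    · simp [LinearMap.mem_ker, hKJy]
    · rw [hJ]; exact ⟨y, rfl⟩
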